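/- Let $(R,\mathfrak{m})$ be a commutative noetherian local ring with $\operatorname{depth} R > 0$, and let $M$ be a finitely generated $R$-module with $\operatorname{depth} M > 0$ such that $M_\mathfrak{p}$ is a free $R_\mathfrak{p}$-module for every prime $\mathfrak{p} \neq \mathfrak{m}$. Then $M$ is torsionless, i.e., the natural biduality map $M \to M^{**}$ is injective. -/

import Mathlib

open CategoryTheory IsLocalRing

noncomputable section

/-- The `i`-th Ext group of `R`-modules `M`, `N`, as a `ModuleCat R`. -/
def ExtGroup (R : Type) [CommRing R] (i : ℕ) (M N : ModuleCat.{0} R) : ModuleCat R :=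
  ((Ext R (ModuleCat.{0} R) i).obj (Opposite.op M)).obj N

/-- The `i`-th Tor group. -/
def TorGroup (R : Type) [CommRing R] (i : ℕ) (M N : ModuleCat.{0} R) : ModuleCat R :=
  ((Tor (ModuleCat.{0} R) i).obj M).obj N

/-- `Ext_R^i(M, N) = 0` for all `i ≫ 0`. -/
def ExtEventuallyZero (R : Type) [CommRing R] (M N : ModuleCat.{0} R) : Prop :=
  ∃ t : ℕ, ∀ i > t, Subsingleton (ExtGroup R i M N)

/-- Property (ee). -/
def PropEE (R : Type) [CommRing R] : Prop :=
  ∀ M N : ModuleCat.{0} R, Module.Finite R M → Module.Finite R N →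
    ExtEventuallyZero R M N → ExtEventuallyZero R N M

/-- Gorenstein: `Ext^i(k, R) = 0` for `i ≫ 0`. -/
def IsGorensteinLocalRing (R : Type) [CommRing R] [IsLocalRing R] : Prop :=
  ∃ t : ℕ, ∀ i > t, Subsingleton
    (ExtGroup R i (ModuleCat.of R (ResidueField R)) (ModuleCat.of R R))

open Classical in
/-- depth of a module over a local ring, with depth of zero module = ⊤. -/
def rdepth (R : Type) [CommRing R] [IsLocalRing R]
    (M : Type) [AddCommGroup M] [Module R M] : ℕ∞ :=
  if Subsingleton M then ⊤ else
    sSup {n : ℕ∞ | ∃ rs : List R, (rs.length : ℕ∞) = n ∧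
      (∀ r ∈ rs, r ∈ maximalIdeal R) ∧ RingTheory.Sequence.IsRegular M rs}

/-- Totally reflexive module. -/
def IsTotallyReflexive (R : Type) [CommRing R]
    (M : Type) [AddCommGroup M] [Module R M] : Prop :=
  Module.Finite R M ∧ Function.Bijective (Module.Dual.eval R M) ∧
  (∀ i > 0, Subsingleton (ExtGroup R i (ModuleCat.of R M) (ModuleCat.of R R))) ∧
  (∀ i > 0, Subsingleton
    (ExtGroup R i (ModuleCat.of R (Module.Dual R M)) (ModuleCat.of R R)))

/-- Property (tr). -/
def PropTR (R : Type) [CommRing R] : Prop :=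
  ∀ (M : Type) [AddCommGroup M] [Module R M], Module.Finite R M →
    (∀ i > 0, Subsingleton (ExtGroup R i (ModuleCat.of R M) (ModuleCat.of R R))) →
    IsTotallyReflexive R M

/-- Property (dep): the depth formula (written additively to avoid truncated subtraction). -/
def PropDep (R : Type) [CommRing R] [IsLocalRing R] : Prop :=
  ∀ (M N : Type) [AddCommGroup M] [Module R M] [AddCommGroup N] [Module R N],
    Module.Finite R M → Module.Finite R N → Nontrivial M → Nontrivial N →
    (∀ i > 0, Subsingleton (TorGroup R i (ModuleCat.of R M) (ModuleCat.of R N))) →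
    rdepth R (TensorProduct R M N) + rdepth R R = rdepth R M + rdepth R N

/-- AB ring. -/
def IsABRing (R : Type) [CommRing R] [IsLocalRing R] : Prop :=
  IsGorensteinLocalRing R ∧ ∃ n : ℕ, ∀ M N : ModuleCat.{0} R,
    Module.Finite R M → Module.Finite R N → ExtEventuallyZero R M N →
    ∀ i > n, Subsingleton (ExtGroup R i M N)

/-- A complex of finitely generated projective modules, indexed by `ℤ`. -/
structure FGProjComplex (R : Type) [CommRing R] where
  X : ℤ → Type
  [acg : ∀ n, AddCommGroup (X n)]
  [mod : ∀ n, Module R (X n)]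
  [fin : ∀ n, Module.Finite R (X n)]
  [proj : ∀ n, Module.Projective R (X n)]
  d : ∀ n : ℤ, X n →ₗ[R] X (n + 1)
  dd : ∀ n : ℤ, (d (n + 1)).comp (d n) = 0

attribute [instance] FGProjComplex.acg FGProjComplex.mod FGProjComplex.fin FGProjComplex.proj

/-- Acyclicity of such a complex. -/
def FGProjComplex.Acyclic {R : Type} [CommRing R] (C : FGProjComplex R) : Prop :=
  ∀ n : ℤ, LinearMap.ker (C.d (n + 1)) = LinearMap.range (C.d n)

/-- The dual complex is acyclic. -/
def FGProjComplex.DualAcyclic {R : Type} [CommRing R] (C : FGProjComplex R) : Prop :=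
  ∀ n : ℤ, LinearMap.ker ((C.d n).dualMap) = LinearMap.range ((C.d (n + 1)).dualMap)

/-- Property (tac): every acyclic complex of f.g. projective modules is totally acyclic. -/
def PropTAC (R : Type) [CommRing R] : Prop :=
  ∀ C : FGProjComplex R, C.Acyclic → C.DualAcyclic

/-- `M` is an ∞-syzygy. -/
def IsInfiniteSyzygy (R : Type) [CommRing R]
    (M : Type) [AddCommGroup M] [Module R M] : Prop :=
  Module.Finite R M ∧
  ∃ (k : ℕ → ℕ) (f : M →ₗ[R] (Fin (k 0) → R))
    (d : ∀ n : ℕ, (Fin (k n) → R) →ₗ[R] (Fin (k (n + 1)) → R)),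
    Function.Injective f ∧ LinearMap.ker (d 0) = LinearMap.range f ∧
    ∀ n : ℕ, LinearMap.ker (d (n + 1)) = LinearMap.range (d n)

end

noncomputable section

/-- Minimal `n`-th syzygy: `IsMinimalSyzygy R n M K` says `K` is the `n`-th syzygy of `M`
computed from a minimal free resolution. -/
def IsMinimalSyzygy (R : Type) [CommRing R] [IsLocalRing R] :
    ℕ → ModuleCat.{0} R → ModuleCat.{0} R → Prop
  | 0, M, K => Nonempty (K ≃ₗ[R] M)
  | n + 1, M, K => ∃ (m : ℕ) (f : (Fin m → R) →ₗ[R] M),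
      Function.Surjective f ∧
      (LinearMap.ker f ≤ (maximalIdeal R) • (⊤ : Submodule R (Fin m → R))) ∧
      IsMinimalSyzygy R n (ModuleCat.of R (LinearMap.ker f)) K

/-- A resolving class of modules: contains `R`, closed under isomorphisms, direct summands,
extensions and syzygies. -/
def IsResolvingClass (R : Type) [CommRing R] (P : ModuleCat.{0} R → Prop) : Prop :=
  (P (ModuleCat.of R R)) ∧
  (∀ X Y : ModuleCat.{0} R, Nonempty (X ≃ₗ[R] Y) → P X → P Y) ∧
  (∀ (X Y : ModuleCat.{0} R) (i : X →ₗ[R] Y) (r : Y →ₗ[R] X),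
      r.comp i = LinearMap.id → P Y → P X) ∧
  (∀ (X Y Z : ModuleCat.{0} R) (f : X →ₗ[R] Y) (g : Y →ₗ[R] Z),
      Function.Injective f → Function.Surjective g → LinearMap.ker g = LinearMap.range f →
      P X → P Z → P Y) ∧
  (∀ (X Y : ModuleCat.{0} R) (m : ℕ) (f : (Fin m → R) →ₗ[R] X), Function.Surjective f →
      Nonempty (Y ≃ₗ[R] LinearMap.ker f) → P X → P Y)

/-- `N` belongs to the resolving closure `res M`. -/
def InResolvingClosure (R : Type) [CommRing R] (M N : ModuleCat.{0} R) : Prop :=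
  ∀ P : ModuleCat.{0} R → Prop, IsResolvingClass R P → P M → P N

/-- `M` has finite G-dimension: it admits a finite resolution by totally reflexive modules. -/
def HasFiniteGDim (R : Type) [CommRing R] (M : Type) [AddCommGroup M] [Module R M] : Prop :=
  ∃ (n : ℕ) (T : ℕ → ModuleCat.{0} R) (d : ∀ i : ℕ, T (i + 1) →ₗ[R] T i) (ε : T 0 →ₗ[R] M),
    (∀ i, IsTotallyReflexive R (T i)) ∧ Function.Surjective ε ∧
    LinearMap.ker ε = LinearMap.range (d 0) ∧
    (∀ i, LinearMap.ker (d i) = LinearMap.range (d (i + 1))) ∧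
    (∀ i > n, Subsingleton (T i))

/-- `ω` is a canonical module of the `d`-dimensional Cohen–Macaulay local ring `R`:
`Ext^i(k, ω)` vanishes for `i ≠ d` and is isomorphic to `k` for `i = d`. -/
def IsCanonicalModule (R : Type) [CommRing R] [IsLocalRing R] (d : ℕ)
    (ω : ModuleCat.{0} R) : Prop :=
  Module.Finite R ω ∧
  (∀ i : ℕ, i ≠ d → Subsingleton (ExtGroup R i (ModuleCat.of R (ResidueField R)) ω)) ∧
  Nonempty ((ExtGroup R d (ModuleCat.of R (ResidueField R)) ω) ≃ₗ[R] (ResidueField R))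

/-- Cohen–Macaulay local ring: depth equals Krull dimension. -/
def IsCohenMacaulayLocalRing (R : Type) [CommRing R] [IsLocalRing R] : Prop :=
  (rdepth R R : WithBot ℕ∞) = ringKrullDim R

end

/-- a finitely generated module of positive depth which is locally free
on the punctured spectrum of a local ring of positive depth is torsionless. -/
theorem stmt13 (R : Type) [CommRing R] [IsLocalRing R] [IsNoetherianRing R]
    (hR : 0 < rdepth R R)
    (M : Type) [AddCommGroup M] [Module R M] (hM : Module.Finite R M)
    (hdepth : 0 < rdepth R M)
    (hloc : ∀ (p : Ideal R) [p.IsPrime], p ≠ maximalIdeal R →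
      Module.Free (Localization.AtPrime p) (LocalizedModule p.primeCompl M)) :
    Function.Injective (Module.Dual.eval R M) := by
  by_cases hMtriv : Subsingleton M
  · exact fun a b _ => Subsingleton.elim a b
  -- extract a regular element r ∈ 𝔪 from positive depth
  rw [rdepth, if_neg hMtriv] at hdepth
  obtain ⟨b, hb, hbpos⟩ := lt_sSup_iff.mp hdepth
  obtain ⟨rs, hlen, hmem, hreg⟩ := hb
  obtain ⟨r, t, rfl⟩ : ∃ r t, rs = r :: t := by
    cases rs with
    | nil => simp at hlen; rw [← hlen] at hbpos; exact absurd hbpos (lt_irrefl 0)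
    | cons r t => exact ⟨r, t, rfl⟩
  have hrm : r ∈ maximalIdeal R := hmem r List.mem_cons_self
  have hrreg : IsSMulRegular M r :=
    ((RingTheory.Sequence.isWeaklyRegular_cons_iff M r t).mp hreg.toIsWeaklyRegular).1
  -- injectivity from kernel
  rw [injective_iff_map_eq_zero]
  intro x hx
  have hx' : ∀ f : M →ₗ[R] R, f x = 0 := fun f => by
    simpa using LinearMap.congr_fun hx f
  haveI : Module.FinitePresentation R M := Module.finitePresentation_of_finite R M
  -- key: x vanishes after localization at any prime p ≠ 𝔪
  have key : ∀ (p : Ideal R), p.IsPrime → p ≠ maximalIdeal R →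
      ∃ s : R, s ∉ p ∧ s • x = 0 := by
    intro p hp hpm
    haveI := hp
    set S : Submonoid R := p.primeCompl with hS
    let Rp := Localization.AtPrime p
    let f := LocalizedModule.mkLinearMap S M
    let g := Algebra.linearMap R Rp
    haveI hg : IsLocalizedModule S g :=
      (isLocalizedModule_iff_isLocalization' S Rp).mpr inferInstance
    -- every R-linear functional on the localized module kills f x
    have hzero : ∀ φ : LocalizedModule S M →ₗ[R] Rp, φ (f x) = 0 := by
      intro φ
      obtain ⟨⟨f0, s⟩, hs⟩ := IsLocalizedModule.surj S (IsLocalizedModule.map S f g) φ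
      have h1 := LinearMap.congr_fun hs (f x)
      rw [IsLocalizedModule.map_apply, hx' f0, map_zero] at h1
      have h2 : (s : R) • φ (f x) = 0 := h1
      have hu : IsUnit (algebraMap R Rp (s : R)) := IsLocalization.map_units Rp s
      rw [Algebra.smul_def] at h2
      exact (hu.mul_right_eq_zero).mp h2
    haveI := hloc p hpm
    have hfx : f x = 0 := by
      let bb := Module.Free.chooseBasis Rp (LocalizedModule S M)
      refine (Module.Basis.forall_coord_eq_zero_iff bb).mp fun i => ?_
      exact hzero ((bb.coord i).restrictScalars R)
    obtain ⟨s, hs⟩ := (IsLocalizedModule.eq_zero_iff S f).mp hfx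
    exact ⟨(s : R), s.2, hs⟩
  -- hence 𝔪 ≤ √(Ann x)
  have hrad : maximalIdeal R ≤ (Ideal.torsionOf R M x).radical := by
    rw [Ideal.radical_eq_sInf]
    refine le_sInf ?_
    rintro p ⟨hIp, hp⟩
    by_cases hpm : p = maximalIdeal R
    · exact hpm ▸ le_rfl
    · obtain ⟨s, hsp, hsx⟩ := key p hp hpm
      exact absurd (hIp ((Ideal.mem_torsionOf_iff x s).mpr hsx)) hsp
  obtain ⟨n, hn⟩ := Ideal.exists_pow_le_of_le_radical_of_fg hrad (IsNoetherian.noetherian _)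
  have hrn : r ^ n • x = 0 :=
    (Ideal.mem_torsionOf_iff x (r ^ n)).mp (hn (Ideal.pow_mem_pow hrm n))
  exact (hrreg.pow n) (by simpa using hrn)
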